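/- Let K be a star body in ℝ^d (d ≥ 1). The gauge function x ↦ ‖x‖_K is 1-Lipschitz on ℝ^d with respect to the Euclidean norm if and only if the closed Euclidean unit ball B^d is contained in ker(K). -/

import Mathlib

open MeasureTheory Metric Set Filter Pointwise

noncomputable section

abbrev Euc (d : ℕ) : Type := EuclideanSpace ℝ (Fin d)

/-- Radial function of a set: `ρ_K(x) = sup {t > 0 : t • x ∈ K}`. -/
def radialFn {d : ℕ} (K : Set (Euc d)) (x : Euc d) : ℝ :=
  sSup {t : ℝ | 0 < t ∧ t • x ∈ K}

/-- A star body: compact, `0` in the interior, star-shaped about `0`, with radial function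
positive and continuous on the unit sphere. -/
def IsStarBody {d : ℕ} (K : Set (Euc d)) : Prop :=
  IsCompact K ∧ (0 : Euc d) ∈ interior K ∧
    (∀ x ∈ K, segment ℝ 0 x ⊆ K) ∧
    (∀ u ∈ sphere (0 : Euc d) 1, 0 < radialFn K u) ∧
    ContinuousOn (radialFn K) (sphere (0 : Euc d) 1)

/-- The kernel of a star body. -/
def starKernel {d : ℕ} (K : Set (Euc d)) : Set (Euc d) :=
  {x | x ∈ K ∧ ∀ y ∈ K, segment ℝ x y ⊆ K}

/-- Radial metric between star bodies. -/
def radialDist {d : ℕ} (K L : Set (Euc d)) : ℝ :=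
  ⨆ u : sphere (0 : Euc d) 1, |radialFn K (u : Euc d) - radialFn L (u : Euc d)|

/-- The adversarial objective `F(K; μ, ν) = E_μ[‖x‖_K] - E_ν[‖x‖_K]`. -/
def Fobj {d : ℕ} (K : Set (Euc d)) (μ ν : Measure (Euc d)) : ℝ :=
  (∫ x, gauge K x ∂μ) - (∫ x, gauge K x ∂ν)


/-- For a star-shaped set, membership in `s • K` is upward closed in the scale `s`. -/
lemma mem_smul_of_star {d : ℕ} {K : Set (Euc d)} (hstar : ∀ x ∈ K, segment ℝ 0 x ⊆ K)
    {x : Euc d} {s t : ℝ} (hs : 0 < s) (hst : s ≤ t) (hx : x ∈ s • K) : x ∈ t • K := by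
  obtain ⟨k, hk, rfl⟩ := hx
  have ht : 0 < t := hs.trans_le hst
  refine ⟨(s / t) • k, hstar k hk ?_, ?_⟩
  · rw [segment_eq_image]
    exact ⟨s / t, ⟨by positivity, div_le_one_of_le₀ hst ht.le⟩, by simp⟩
  · show t • ((s / t) • k) = s • k
    rw [smul_smul, mul_div_cancel₀ _ ht.ne']

/-- For a star-shaped absorbent set, `gauge K x < t` implies `x ∈ t • K`. -/
lemma mem_smul_of_gauge_lt {d : ℕ} {K : Set (Euc d)} (habs : Absorbent ℝ K)
    (hstar : ∀ x ∈ K, segment ℝ 0 x ⊆ K) {x : Euc d} {t : ℝ}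
    (h : gauge K x < t) : x ∈ t • K := by
  obtain ⟨b, hb0, hbt, hbx⟩ := exists_lt_of_gauge_lt habs h
  exact mem_smul_of_star hstar hb0 hbt.le hbx

/-- For a closed, star-shaped, absorbent set, `gauge K x ≤ 1` implies `x ∈ K`. -/
lemma mem_of_gauge_le_one {d : ℕ} {K : Set (Euc d)} (hcl : IsClosed K)
    (habs : Absorbent ℝ K) (hstar : ∀ x ∈ K, segment ℝ 0 x ⊆ K) {x : Euc d}
    (h : gauge K x ≤ 1) : x ∈ K := by
  have key : ∀ n : ℕ, (1 + (n + 1 : ℝ)⁻¹)⁻¹ • x ∈ K := by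
    intro n
    have hn : (0:ℝ) < (n + 1 : ℝ)⁻¹ := by positivity
    have hx : x ∈ (1 + (n + 1 : ℝ)⁻¹) • K :=
      mem_smul_of_gauge_lt habs hstar (h.trans_lt (by linarith))
    rwa [mem_smul_set_iff_inv_smul_mem₀ (by positivity)] at hx
  have hlim : Filter.Tendsto (fun n : ℕ => (1 + (n + 1 : ℝ)⁻¹)⁻¹ • x) Filter.atTop (nhds x) := by
    have h1 : Filter.Tendsto (fun n : ℕ => (1 + (n + 1 : ℝ)⁻¹)⁻¹) Filter.atTop (nhds 1) := by
      have := (tendsto_one_div_add_atTop_nhds_zero_nat).const_add (1 : ℝ)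
      simp only [one_div] at this
      have h2 := this.inv₀ (by norm_num)
      simpa using h2
    simpa using h1.smul_const x
  exact hcl.mem_of_tendsto hlim (Filter.Eventually.of_forall key)

/-- Key inequality: if the unit ball lies in the kernel of `K`, the gauge is subadditive
with respect to the norm of differences. -/
lemma gauge_le_gauge_add_norm {d : ℕ} {K : Set (Euc d)} (habs : Absorbent ℝ K)
    (hstar : ∀ x ∈ K, segment ℝ 0 x ⊆ K)
    (hker : closedBall (0 : Euc d) 1 ⊆ starKernel K) (x y : Euc d) :
    gauge K x ≤ gauge K y + ‖x - y‖ := by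
  rcases eq_or_ne x y with rfl | hxy
  · simp [gauge_nonneg]
  have hr : 0 < ‖x - y‖ := by simpa [sub_eq_zero] using hxy
  set r := ‖x - y‖ with hr_def
  refine le_of_forall_pos_le_add fun ε hε => ?_
  set t := gauge K y + ε with ht_def
  have ht : 0 < t := lt_of_lt_of_le hε (by simp [ht_def, gauge_nonneg])
  -- y ∈ t • K
  obtain ⟨k, hk, hyk⟩ := mem_smul_of_gauge_lt habs hstar
    (show gauge K y < t by simp [ht_def, hε])
  -- the unit vector in direction x - y lies in the kernel
  have hz : r⁻¹ • (x - y) ∈ starKernel K := by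
    apply hker
    rw [mem_closedBall, dist_zero_right, norm_smul, Real.norm_eq_abs,
      abs_of_pos (inv_pos.2 hr), inv_mul_cancel₀ hr.ne']
  set z := r⁻¹ • (x - y) with hz_def
  have hseg : segment ℝ z k ⊆ K := hz.2 k hk
  have hmem : (r / (t + r)) • z + (t / (t + r)) • k ∈ K := by
    apply hseg
    rw [segment_eq_image]
    refine ⟨t / (t + r), ⟨by positivity, div_le_one_of_le₀ (by linarith) (by positivity)⟩, ?_⟩
    have h5 : 1 - t / (t + r) = r / (t + r) := by field_simp; ring
    show (1 - t / (t + r)) • z + (t / (t + r)) • k = (r / (t + r)) • z + (t / (t + r)) • k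
    rw [h5]
  have hx : x ∈ (t + r) • K := by
    refine ⟨(r / (t + r)) • z + (t / (t + r)) • k, hmem, ?_⟩
    have htr : (0:ℝ) < t + r := by linarith
    show (t + r) • ((r / (t + r)) • z + (t / (t + r)) • k) = x
    have hyk' : t • k = y := hyk
    have e1 : (t + r) * (r / (t + r)) * r⁻¹ = 1 := by field_simp
    have e2 : (t + r) * (t / (t + r)) = t := by field_simp
    rw [hz_def, smul_add, smul_smul, smul_smul, smul_smul, e1, e2, one_smul, hyk']
    abel
  calc gauge K x ≤ t + r := gauge_le_of_mem (by positivity) hx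
    _ = gauge K y + r + ε := by ring

/-- The gauge of a star body `K` is `1`-Lipschitz if and only if the
closed Euclidean unit ball is contained in the kernel of `K`. -/
theorem gauge_lipschitz_iff_ball_subset_kernel {d : ℕ} (hd : 1 ≤ d)
    (K : Set (Euc d)) (hK : IsStarBody K) :
    LipschitzWith 1 (fun x : Euc d => gauge K x) ↔
      closedBall (0 : Euc d) 1 ⊆ starKernel K := by
  obtain ⟨hcomp, h0, hstar, -, -⟩ := hK
  have habs : Absorbent ℝ K := absorbent_nhds_zero (mem_interior_iff_mem_nhds.1 h0)
  have hcl : IsClosed K := hcomp.isClosed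
  constructor
  · intro hL b hb
    have hgauge : ∀ x y : Euc d, gauge K x ≤ gauge K y + ‖x - y‖ := by
      intro x y
      have := hL.dist_le_mul x y
      rw [Real.dist_eq, dist_eq_norm, NNReal.coe_one, one_mul] at this
      have := (abs_le.1 this).2
      linarith
    have hb1 : ‖b‖ ≤ 1 := by simpa [mem_closedBall, dist_eq_norm] using hb
    have hbK : b ∈ K := by
      apply mem_of_gauge_le_one hcl habs hstar
      have := hgauge b 0
      simpa using this.trans (by simpa using hb1)
    refine ⟨hbK, fun y hy w hw => ?_⟩
    rw [segment_eq_image] at hw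
    obtain ⟨c, ⟨hc0, hc1⟩, rfl⟩ := hw
    apply mem_of_gauge_le_one hcl habs hstar
    have h1 : gauge K ((1 - c) • b + c • y) ≤ gauge K (c • y) + ‖(1 - c) • b‖ := by
      have := hgauge ((1 - c) • b + c • y) (c • y)
      simpa using this
    have h2 : gauge K (c • y) = c * gauge K y := gauge_smul_of_nonneg hc0 y
    have h3 : gauge K y ≤ 1 := gauge_le_one_of_mem hy
    have h4 : ‖(1 - c) • b‖ ≤ 1 - c := by
      rw [norm_smul, Real.norm_of_nonneg (by linarith)]
      nlinarith
    nlinarith [(gauge_nonneg (c • y) : (0:ℝ) ≤ gauge K (c • y))]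
  · intro hker
    refine LipschitzWith.of_dist_le_mul fun x y => ?_
    rw [Real.dist_eq, dist_eq_norm, NNReal.coe_one, one_mul]
    rw [abs_sub_le_iff]
    constructor
    · have := gauge_le_gauge_add_norm habs hstar hker x y
      linarith
    · have := gauge_le_gauge_add_norm habs hstar hker y x
      rw [norm_sub_rev] at this
      linarith
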